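/- Let c > 0, let h : [0,c] → ℝ be a piecewise affine function with |h'(x)| ≤ 1 wherever defined, let δ > 0, and let U be a random variable uniformly distributed on an interval of length δ. Then for every positive integer t, the probability that #{x ∈ [0,c] : h(x) = U} ≥ t is at most c/(δ·t). -/

import Mathlib

open MeasureTheory Set
open scoped ENNReal NNReal

/-- `h` is piecewise affine on `[0,c]` with `P` pieces given by partition points
`x 0 = 0 < x 1 < ... < x P = c`, with slope `a p` and intercept `b p` on the `p`-th piece. -/
def PiecewiseAffinePartition (h : ℝ → ℝ) (c : ℝ) (P : ℕ) (x a b : ℕ → ℝ) : Prop :=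
  x 0 = 0 ∧ x P = c ∧ (∀ p < P, x p < x (p + 1)) ∧
    ∀ p < P, ∀ y ∈ Set.Ioc (x p) (x (p + 1)), h y = a p * y + b p

lemma encard_biUnion_le_sum {α ι : Type*} (s : Finset ι) (T : ι → Set α) :
    (⋃ i ∈ s, T i).encard ≤ ∑ i ∈ s, (T i).encard := by
  classical
  induction s using Finset.induction_on with
  | empty => simp
  | @insert a s ha ih =>
      rw [Finset.set_biUnion_insert, Finset.sum_insert ha]
      exact (Set.encard_union_le _ _).trans (add_le_add_right ih _)

lemma exists_piece (x : ℕ → ℝ) (P : ℕ) (z : ℝ) (hz : z ∈ Set.Ioc (x 0) (x P)) :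
    ∃ p < P, z ∈ Set.Ioc (x p) (x (p + 1)) := by
  classical
  have hex : ∃ n, z ≤ x n := ⟨P, hz.2⟩
  have hq : z ≤ x (Nat.find hex) := Nat.find_spec hex
  have hq0 : Nat.find hex ≠ 0 := by
    intro h0
    rw [h0] at hq
    exact absurd hq (not_le.2 hz.1)
  obtain ⟨r, hr⟩ := Nat.exists_eq_succ_of_ne_zero hq0
  have hlt : x r < z := by
    have := Nat.find_min hex (m := r) (by omega)
    push_neg at this
    exact this
  have hqP : Nat.find hex ≤ P := Nat.find_min' hex hz.2
  refine ⟨r, by omega, hlt, ?_⟩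
  rw [hr] at hq
  exact hq

/-- For `h` piecewise affine on `[0,c]` with slopes bounded by `1` and `U` uniformly
distributed on an interval of length `δ`, the probability that `h(x) = U` has at least `t`
solutions is at most `c/(δ·t)`. -/
theorem prob_many_crossings_le (c : ℝ) (hc : 0 < c) (h : ℝ → ℝ) (P : ℕ) (x a b : ℕ → ℝ)
    (hpa : PiecewiseAffinePartition h c P x a b)
    (hslope : ∀ p < P, |a p| ≤ 1)
    (δ : ℝ) (hδ : 0 < δ) (u : ℝ) (t : ℕ) (ht : 0 < t) :
    (ENNReal.ofReal δ)⁻¹ *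
        volume {y ∈ Set.Icc u (u + δ) |
          (t : ℕ∞) ≤ {z ∈ Set.Icc (0:ℝ) c | h z = y}.encard}
      ≤ ENNReal.ofReal (c / (δ * t)) := by
  classical
  obtain ⟨hx0, hxP, hxlt, haff⟩ := hpa
  set S : ℕ → Set ℝ := fun p => Set.uIcc (a p * x p + b p) (a p * x (p + 1) + b p) with hS
  set g : ℝ → ℝ≥0∞ := fun y => ∑ p ∈ Finset.range P, (S p).indicator 1 y with hg
  have hgmeas : Measurable g :=
    Finset.measurable_sum _ fun p _ => measurable_const.indicator measurableSet_uIcc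
  set B : Set ℝ := {h 0} ∪ ⋃ p ∈ Finset.range P, {b p} with hB
  have hBfin : B.Finite :=
    (Set.finite_singleton _).union
      (Set.Finite.biUnion (Finset.finite_toSet _) fun _ _ => Set.finite_singleton _)
  have hBnull : volume B = 0 := hBfin.measure_zero _
  -- key pointwise bound
  have key : ∀ y, y ∉ B → (t : ℕ∞) ≤ {z ∈ Set.Icc (0:ℝ) c | h z = y}.encard →
      (t : ℝ≥0∞) ≤ g y := by
    intro y hyB hty
    have hy0 : h 0 ≠ y := by
      intro hcon; exact hyB (Or.inl hcon.symm)
    have hyb : ∀ p < P, b p ≠ y := by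
      intro p hp hcon
      exact hyB (Or.inr (Set.mem_biUnion (Finset.mem_range.2 hp) hcon.symm))
    set T : ℕ → Set ℝ := fun p => {z ∈ Set.Ioc (x p) (x (p + 1)) | h z = y} with hT
    have hsub : {z ∈ Set.Icc (0:ℝ) c | h z = y} ⊆ ⋃ p ∈ Finset.range P, T p := by
      rintro z ⟨hz, hhz⟩
      have hz0 : z ≠ 0 := by
        rintro rfl; exact hy0 hhz
      have hmem : z ∈ Set.Ioc (x 0) (x P) := by
        rw [hx0, hxP]
        exact ⟨lt_of_le_of_ne hz.1 (Ne.symm hz0), hz.2⟩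
      obtain ⟨p, hpP, hzp⟩ := exists_piece x P z hmem
      exact Set.mem_biUnion (Finset.mem_range.2 hpP) ⟨hzp, hhz⟩
    have hpiece : ∀ p ∈ Finset.range P,
        (T p).encard ≤ (if y ∈ S p then 1 else 0 : ℕ∞) := by
      intro p hp
      rw [Finset.mem_range] at hp
      rcases eq_or_ne (a p) 0 with ha | ha
      · have hTe : T p = ∅ := by
          ext z
          simp only [hT, Set.mem_sep_iff, Set.mem_empty_iff_false, iff_false, not_and]
          intro hz hhz
          rw [haff p hp z hz, ha, zero_mul, zero_add] at hhz
          exact hyb p hp hhz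
        simp [hTe]
      · by_cases hne : (T p).Nonempty
        · obtain ⟨z, hz, hhz⟩ := hne
          rw [haff p hp z hz] at hhz
          have hyS : y ∈ S p := by
            rw [hS]
            simp only [Set.mem_uIcc]
            rcases le_total 0 (a p) with h0 | h0
            · left
              constructor <;> nlinarith [hz.1, hz.2]
            · right
              constructor <;> nlinarith [hz.1, hz.2]
          rw [if_pos hyS]
          rw [Set.encard_le_one_iff]
          intro z1 z2 hz1 hz2
          have e1 : a p * z1 + b p = y := by
            rw [← haff p hp z1 hz1.1]; exact hz1.2
          have e2 : a p * z2 + b p = y := by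
            rw [← haff p hp z2 hz2.1]; exact hz2.2
          have : a p * z1 = a p * z2 := by linarith
          exact mul_left_cancel₀ ha this
        · rw [Set.not_nonempty_iff_eq_empty] at hne
          simp [hne]
    have hchain : (t : ℕ∞) ≤ ∑ p ∈ Finset.range P, (if y ∈ S p then 1 else 0 : ℕ∞) :=
      hty.trans ((Set.encard_mono hsub).trans
        ((encard_biUnion_le_sum _ _).trans (Finset.sum_le_sum hpiece)))
    set n : ℕ := ∑ p ∈ Finset.range P, (if y ∈ S p then 1 else 0 : ℕ) with hn
    have hcast : ((n : ℕ∞)) = ∑ p ∈ Finset.range P, (if y ∈ S p then 1 else 0 : ℕ∞) := by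
      push_cast [hn, apply_ite (Nat.cast : ℕ → ℕ∞)]
      rfl
    rw [← hcast] at hchain
    have htn : t ≤ n := by exact_mod_cast hchain
    have hgn : g y = (n : ℝ≥0∞) := by
      rw [hg, hn]
      push_cast [apply_ite (Nat.cast : ℕ → ℝ≥0∞)]
      refine Finset.sum_congr rfl fun p _ => ?_
      simp [Set.indicator_apply]
    rw [hgn]
    exact_mod_cast htn
  -- volume bound
  have hvol : volume {y ∈ Set.Icc u (u + δ) |
      (t : ℕ∞) ≤ {z ∈ Set.Icc (0:ℝ) c | h z = y}.encard}
      ≤ volume {y | (t : ℝ≥0∞) ≤ g y} := by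
    have hsub2 : {y ∈ Set.Icc u (u + δ) |
        (t : ℕ∞) ≤ {z ∈ Set.Icc (0:ℝ) c | h z = y}.encard}
        ⊆ {y | (t : ℝ≥0∞) ≤ g y} ∪ B := by
      intro y hy
      by_cases hyB : y ∈ B
      · exact Or.inr hyB
      · exact Or.inl (key y hyB hy.2)
    calc volume _ ≤ volume ({y | (t : ℝ≥0∞) ≤ g y} ∪ B) := measure_mono hsub2
      _ ≤ volume {y | (t : ℝ≥0∞) ≤ g y} + volume B := measure_union_le _ _
      _ = volume {y | (t : ℝ≥0∞) ≤ g y} := by rw [hBnull, add_zero]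
  have ht0 : (t : ℝ≥0∞) ≠ 0 := by exact_mod_cast ht.ne'
  have htT : (t : ℝ≥0∞) ≠ ⊤ := ENNReal.natCast_ne_top t
  have hmarkov : volume {y | (t : ℝ≥0∞) ≤ g y} ≤ (∫⁻ y, g y) / t :=
    meas_ge_le_lintegral_div hgmeas.aemeasurable ht0 htT
  have hint : (∫⁻ y, g y) ≤ ENNReal.ofReal c := by
    have hSm : ∀ p, MeasurableSet (S p) := fun p => measurableSet_uIcc
    have hstep : (∫⁻ y, g y) = ∑ p ∈ Finset.range P, ∫⁻ y, (S p).indicator 1 y := by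
      rw [hg]
      exact lintegral_finset_sum _ fun p _ => measurable_const.indicator (hSm p)
    rw [hstep]
    calc ∑ p ∈ Finset.range P, ∫⁻ y, (S p).indicator 1 y
        = ∑ p ∈ Finset.range P, volume (S p) := by
          refine Finset.sum_congr rfl fun p _ => ?_
          exact lintegral_indicator_one (hSm p)
      _ ≤ ∑ p ∈ Finset.range P, ENNReal.ofReal (x (p + 1) - x p) := by
          refine Finset.sum_le_sum fun p hp => ?_
          rw [Finset.mem_range] at hp
          have hlen : 0 ≤ x (p + 1) - x p := by linarith [hxlt p hp]
          have : volume (S p) = ENNReal.ofReal (|a p| * (x (p + 1) - x p)) := by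
            rw [hS]
            simp only
            rw [Set.uIcc, Real.volume_Icc, max_sub_min_eq_abs]
            congr 1
            rw [show a p * x (p + 1) + b p - (a p * x p + b p) = a p * (x (p + 1) - x p) by ring,
              abs_mul, abs_of_nonneg hlen]
          rw [this]
          exact ENNReal.ofReal_le_ofReal (by nlinarith [hslope p hp, abs_nonneg (a p)])
      _ = ENNReal.ofReal (∑ p ∈ Finset.range P, (x (p + 1) - x p)) := by
          rw [ENNReal.ofReal_sum_of_nonneg]
          intro p hp
          rw [Finset.mem_range] at hp
          linarith [hxlt p hp]
      _ = ENNReal.ofReal c := by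
          rw [Finset.sum_range_sub, hx0, hxP, sub_zero]
  have heq : (ENNReal.ofReal δ)⁻¹ * (ENNReal.ofReal c / t) = ENNReal.ofReal (c / (δ * t)) := by
    have hδ0 : ENNReal.ofReal δ ≠ 0 := by
      simp [ENNReal.ofReal_eq_zero, not_le, hδ]
    have hδT : ENNReal.ofReal δ ≠ ⊤ := ENNReal.ofReal_ne_top
    rw [ENNReal.ofReal_div_of_pos (by positivity), ENNReal.ofReal_mul hδ.le,
      ENNReal.ofReal_natCast, div_eq_mul_inv, div_eq_mul_inv,
      ENNReal.mul_inv (Or.inl hδ0) (Or.inl hδT)]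
    ring
  calc (ENNReal.ofReal δ)⁻¹ *
        volume {y ∈ Set.Icc u (u + δ) |
          (t : ℕ∞) ≤ {z ∈ Set.Icc (0:ℝ) c | h z = y}.encard}
      ≤ (ENNReal.ofReal δ)⁻¹ * ((∫⁻ y, g y) / t) :=
        mul_le_mul_right (hvol.trans hmarkov) _
    _ ≤ (ENNReal.ofReal δ)⁻¹ * (ENNReal.ofReal c / t) :=
        mul_le_mul_right (ENNReal.div_le_div_right hint _) _
    _ = ENNReal.ofReal (c / (δ * t)) := heq
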